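/- Let M be a finite set of mutant IDs, D ⊆ M the set of IDs of the mutant variants at a location, and suppose the original variant (enabled for M \ D) is among the filtered variants V, whose mutant variants have ID set D' ⊆ D. Then for every I ⊆ M, the set of mutants of I represented by V, namely {i ∈ I : i ∈ D' or i ∈ M \ D}, equals I \ (D \ D'). This is the correctness of the negative (ID-removal) branch of the constant-time implementation of filter_mutants. -/
import Mathlib

/-- Correctness of the negative (ID-removal) branch of the constant-time
implementation of `filter_mutants`: with mutant-variant IDs `D ⊆ M`, filtered
mutant-variant IDs `D' ⊆ D`, and the original variant (enabled for `M \ D`)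
included in the filtered variant set, for every `I ⊆ M` the set of mutants of `I`
represented by the filtered variants, `{i ∈ I : i ∈ D' ∨ i ∈ M \ D}`, equals
`I \ (D \ D')`. -/
theorem stmt4 {ID : Type} [DecidableEq ID] (M D D' : Finset ID) (hD : D ⊆ M)
    (hD' : D' ⊆ D) (I : Finset ID) (hI : I ⊆ M) :
    I.filter (fun i => i ∈ D' ∨ i ∈ M \ D) = I \ (D \ D') := by
  ext i
  simp only [Finset.mem_filter, Finset.mem_sdiff]
  constructor
  · rintro ⟨hiI, h⟩
    refine ⟨hiI, ?_⟩
    rintro ⟨hD1, hD2⟩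
    rcases h with h | ⟨_, h⟩
    · exact hD2 h
    · exact h hD1
  · rintro ⟨hiI, h⟩
    refine ⟨hiI, ?_⟩
    by_cases hd : i ∈ D
    · left; by_contra hd'; exact h ⟨hd, hd'⟩
    · right; exact ⟨hI hiI, hd⟩
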